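/- arXiv:1512.00380 — 6 statements merged into one kernel-verified Lean document; each statement's English description precedes it below -/
import Mathlib

section
/- For every closed set T ⊆ [0,1] × ℝ there exist a countable set A ⊆ [0,1] and a function f : A → ℝ such that the set of accumulation points (in ℝ²) of the graph {(a, f a) : a ∈ A} is exactly T. -/
open Set Filter Topology Metric

noncomputable section

/-- The graph of `f` restricted to the set `A`, as a subset of `ℝ × ℝ`. -/
def graphOn (A : Set ℝ) (f : ℝ → ℝ) : Set (ℝ × ℝ) :=
  {p : ℝ × ℝ | p.1 ∈ A ∧ p.2 = f p.1}

/-- The set of accumulation points of a set `G ⊆ ℝ × ℝ`. -/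
def accPts (G : Set (ℝ × ℝ)) : Set (ℝ × ℝ) :=
  {p : ℝ × ℝ | AccPt p (𝓟 G)}

/-- Baire class 1 on `[0,1]`: pointwise limit of continuous functions. -/
def Baire1 (f : ℝ → ℝ) : Prop :=
  ∃ g : ℕ → ℝ → ℝ, (∀ n, ContinuousOn (g n) (Icc 0 1)) ∧
    ∀ x ∈ Icc (0:ℝ) 1, Tendsto (fun n => g n x) atTop (𝓝 (f x))

/-- Baire class 2 on `[0,1]`: pointwise limit of Baire class 1 functions. -/
def Baire2 (f : ℝ → ℝ) : Prop :=
  ∃ g : ℕ → ℝ → ℝ, (∀ n, Baire1 (g n)) ∧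
    ∀ x ∈ Icc (0:ℝ) 1, Tendsto (fun n => g n x) atTop (𝓝 (f x))

/-- A set is meager relative to the subspace `[0,1]`. -/
def MeagreIn01 (D : Set ℝ) : Prop :=
  IsMeagre ((↑) ⁻¹' D : Set (Icc (0:ℝ) 1))

/-- Embedding of the plane into `ℝ × ℝ̄` (extended reals in the second coordinate). -/
def embedE (p : ℝ × ℝ) : ℝ × EReal := (p.1, (p.2 : EReal))

lemma key_avoid (s : Set ℝ) (hs : s.Finite) (x : ℝ) (hx : x ∈ Icc (0:ℝ) 1)
    (ε : ℝ) (hε : 0 < ε) : ∃ y, y ∈ Icc (0:ℝ) 1 ∧ |y - x| < ε ∧ y ∉ s := by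
  have hinf : (Icc (0:ℝ) 1 ∩ Ioo (x - ε) (x + ε)).Infinite := by
    rcases lt_or_eq_of_le hx.2 with h | h
    · have hinf0 : (Ioo x (min 1 (x + ε))).Infinite :=
        Set.Ioo_infinite (lt_min h (by linarith))
      refine Set.Infinite.mono ?_ hinf0
      intro y hy
      exact ⟨⟨le_of_lt (lt_of_le_of_lt hx.1 hy.1), le_of_lt (lt_of_lt_of_le hy.2 (min_le_left _ _))⟩,
        ⟨by linarith [hy.1], lt_of_lt_of_le hy.2 (min_le_right _ _)⟩⟩
    · subst h
      have hinf0 : (Ioo (max 0 (1 - ε)) 1).Infinite :=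
        Set.Ioo_infinite (max_lt one_pos (by linarith))
      refine Set.Infinite.mono ?_ hinf0
      intro y hy
      refine ⟨⟨le_of_lt (lt_of_le_of_lt (le_max_left _ _) hy.1), le_of_lt hy.2⟩,
        ⟨lt_of_le_of_lt (le_max_right _ _) hy.1, by linarith [hy.2]⟩⟩
  obtain ⟨y, hy, hys⟩ := (hinf.diff hs).nonempty
  exact ⟨y, hy.1, abs_sub_lt_iff.2 ⟨by linarith [hy.2.2], by linarith [hy.2.1]⟩, hys⟩

lemma exists_inj_seq (x : ℕ → ℝ) (hx : ∀ m, x m ∈ Icc (0:ℝ) 1) :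
    ∃ a : ℕ → ℝ, Function.Injective a ∧
      ∀ m, a m ∈ Icc (0:ℝ) 1 ∧ |a m - x m| < 1 / (m + 1) := by
  have H : ∀ (l : List ℝ) (m : ℕ), ∃ y, y ∈ Icc (0:ℝ) 1 ∧ |y - x m| < 1 / (m + 1) ∧ y ∉ l := by
    intro l m
    exact key_avoid {y | y ∈ l} (List.finite_toSet l) (x m) (hx m) _ (by positivity)
  choose pick h1 h2 h3 using H
  set L : ℕ → List ℝ := fun n => Nat.rec [] (fun m l => l ++ [pick l m]) n with hL
  refine ⟨fun m => pick (L m) m, ?_, fun m => ⟨h1 _ _, h2 _ _⟩⟩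
  have hLsucc : ∀ m, L (m + 1) = L m ++ [pick (L m) m] := fun m => rfl
  have hmem : ∀ j m, j < m → pick (L j) j ∈ L m := by
    intro j m hjm
    induction m with
    | zero => omega
    | succ m ih =>
      rw [hLsucc m, List.mem_append]
      rcases Nat.lt_or_ge j m with h | h
      · exact Or.inl (ih h)
      · have : j = m := by omega
        subst this; exact Or.inr (List.mem_singleton.2 rfl)
  intro m m' h
  have h' : pick (L m) m = pick (L m') m' := h
  rcases lt_trichotomy m m' with hlt | heq | hlt
  · exact absurd (h' ▸ hmem m m' hlt) (h3 (L m') m')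
  · exact heq
  · exact absurd (h'.symm ▸ hmem m' m hlt) (h3 (L m) m)

lemma finite_no_accPt {F : Set (ℝ × ℝ)} (hF : F.Finite) (p : ℝ × ℝ) :
    ¬ AccPt p (𝓟 F) := by
  rw [accPt_principal_iff_clusterPt, clusterPt_principal_iff_frequently]
  intro h
  have hclosed : IsClosed (F \ {p}) := hF.diff.isClosed
  have hp : p ∈ closure (F \ {p}) := by
    rw [mem_closure_iff_frequently]; exact h
  rw [hclosed.closure_eq] at hp
  exact hp.2 rfl

theorem stmt0 (T : Set (ℝ × ℝ)) (hTc : IsClosed T)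
    (hT : ∀ p ∈ T, p.1 ∈ Icc (0:ℝ) 1) :
    ∃ A : Set ℝ, A ⊆ Icc 0 1 ∧ A.Countable ∧
      ∃ f : ℝ → ℝ, accPts (graphOn A f) = T := by
  rcases T.eq_empty_or_nonempty with rfl | hTne
  · refine ⟨∅, empty_subset _, countable_empty, 0, ?_⟩
    have h0 : _root_.graphOn ∅ 0 = ∅ := by
      ext p; simp [_root_.graphOn]
    rw [h0]
    ext p
    simp [accPts, AccPt]
  · -- dense sequence in T
    haveI : Nonempty T := hTne.to_subtype
    obtain ⟨u, hu⟩ := TopologicalSpace.exists_dense_seq T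
    set d : ℕ → ℝ × ℝ := fun n => (u n : ℝ × ℝ) with hd
    have hdT : ∀ n, d n ∈ T := fun n => (u n).2
    have hdense : ∀ t ∈ T, ∀ ε : ℝ, 0 < ε → ∃ n, dist (d n) t < ε := by
      intro t ht ε hε
      obtain ⟨n, hn⟩ := hu.exists_dist_lt (⟨t, ht⟩ : T) hε
      exact ⟨n, by rw [dist_comm]; exact hn⟩
    obtain ⟨a, ha_inj, ha⟩ := exists_inj_seq (fun m => (d m.unpair.1).1)
      (fun m => hT _ (hdT m.unpair.1))
    set q : ℕ → ℝ × ℝ := fun m => (a m, (d m.unpair.1).2) with hq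
    have hq_inj : Function.Injective q := by
      intro m m' h
      exact ha_inj (congrArg Prod.fst h)
    set f : ℝ → ℝ := fun z => (d (Function.invFun a z).unpair.1).2 with hf
    have hfa : ∀ m, f (a m) = (d m.unpair.1).2 := by
      intro m
      simp only [hf, Function.leftInverse_invFun ha_inj m]
    have hG : _root_.graphOn (Set.range a) f = Set.range q := by
      ext p
      constructor
      · rintro ⟨⟨m, hm⟩, hp2⟩
        rw [← hm] at hp2
        rw [hfa m] at hp2
        exact ⟨m, Prod.ext_iff.2 ⟨hm, hp2.symm⟩⟩
      · rintro ⟨m, rfl⟩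
        exact ⟨⟨m, rfl⟩, (hfa m).symm⟩
    have hdistq : ∀ m, dist (q m) (d m.unpair.1) < 1 / (m + 1) := by
      intro m
      have h1 : (0:ℝ) < 1 / (m + 1) := by positivity
      rw [Prod.dist_eq]
      apply max_lt
      · rw [Real.dist_eq]; exact (ha m).2
      · simpa [hq] using h1
    refine ⟨Set.range a, ?_, Set.countable_range a, f, ?_⟩
    · rintro z ⟨m, rfl⟩; exact (ha m).1
    rw [hG]
    ext p
    simp only [accPts, mem_setOf_eq]
    constructor
    · -- accumulation points of the graph lie in T
      intro hp
      rw [← hTc.closure_eq]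
      rw [Metric.mem_closure_iff]
      intro ε hε
      obtain ⟨M, hM⟩ := exists_nat_one_div_lt (show (0:ℝ) < ε / 2 by linarith)
      set F : Set (ℝ × ℝ) := q '' {m | m < M} with hF
      have hFfin : F.Finite := (Set.finite_lt_nat M).image q
      have hsplit : Set.range q = F ∪ (Set.range q \ F) := by
        rw [Set.union_diff_self, Set.union_eq_self_of_subset_left (Set.image_subset_range _ _)]
      rw [hsplit, ← sup_principal, accPt_sup] at hp
      rcases hp with hp | hp
      · exact absurd hp (finite_no_accPt hFfin p)
      rw [accPt_iff_nhds] at hp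
      obtain ⟨y, ⟨hyb, hyG, hyF⟩, _⟩ := hp (Metric.ball p (ε / 2))
        (Metric.ball_mem_nhds p (by linarith))
      obtain ⟨m, rfl⟩ := hyG
      have hmM : M ≤ m := by
        by_contra hc
        exact hyF ⟨m, show m < M by omega, rfl⟩
      refine ⟨d m.unpair.1, hdT _, ?_⟩
      have h1 : dist (q m) (d m.unpair.1) < 1 / (M + 1) := by
        refine lt_of_lt_of_le (hdistq m) ?_
        apply one_div_le_one_div_of_le (by positivity)
        exact_mod_cast Nat.succ_le_succ hmM
      calc dist p (d m.unpair.1) ≤ dist p (q m) + dist (q m) (d m.unpair.1) := dist_triangle _ _ _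
        _ < ε / 2 + 1 / (M + 1) := by
            rw [Metric.mem_ball] at hyb
            rw [dist_comm] at hyb
            exact add_lt_add hyb h1
        _ < ε := by linarith
    · -- every point of T is an accumulation point
      intro ht
      rw [accPt_iff_nhds]
      intro U hU
      obtain ⟨ε, hε, hball⟩ := Metric.mem_nhds_iff.1 hU
      obtain ⟨n, hn⟩ := hdense p ht (ε / 2) (by linarith)
      obtain ⟨K, hK⟩ := exists_nat_one_div_lt (show (0:ℝ) < ε / 2 by linarith)
      have hqball : ∀ k, K ≤ k → q (Nat.pair n k) ∈ Metric.ball p ε := by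
        intro k hk
        set m := Nat.pair n k with hm
        have hKm : K ≤ m := le_trans hk (Nat.right_le_pair n k)
        have h1 : dist (q m) (d n) < ε / 2 := by
          have h2 := hdistq m
          rw [hm, Nat.unpair_pair] at h2
          have h3 : (1:ℝ) / (↑m + 1) ≤ 1 / (↑K + 1) := by
            apply one_div_le_one_div_of_le (by positivity)
            exact_mod_cast Nat.succ_le_succ hKm
          exact lt_trans (lt_of_lt_of_le h2 h3) hK
        rw [Metric.mem_ball]
        calc dist (q m) p ≤ dist (q m) (d n) + dist (d n) p := dist_triangle _ _ _
          _ < ε / 2 + ε / 2 := add_lt_add h1 hn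
          _ = ε := by linarith
      have hne : q (Nat.pair n K) ≠ q (Nat.pair n (K + 1)) := by
        intro h
        have := hq_inj h
        have := Nat.pair_eq_pair.1 this
        omega
      rcases eq_or_ne (q (Nat.pair n K)) p with h | h
      · exact ⟨q (Nat.pair n (K + 1)),
          ⟨hball (hqball (K + 1) (by omega)), ⟨_, rfl⟩⟩, fun hc => hne (h.trans hc.symm)⟩
      · exact ⟨q (Nat.pair n K), ⟨hball (hqball K le_rfl), ⟨_, rfl⟩⟩, h⟩
end
end

section
/- Moreover, the function of the previous lemma can be chosen so that for every ε > 0, only finitely many points of its graph are at distance greater than ε from T. -/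
open Set Filter Topology Metric

noncomputable section

lemma exists_pt (a δ : ℝ) (ha : a ∈ Icc (0:ℝ) 1) (hδ : 0 < δ) (S : Finset ℝ) :
    ∃ z, z ∈ Icc (0:ℝ) 1 ∧ |z - a| < δ ∧ z ∉ S := by
  have hcd : max 0 (a - δ) < min 1 (a + δ) := by
    rw [max_lt_iff, lt_min_iff, lt_min_iff]
    exact ⟨⟨one_pos, by linarith [ha.1]⟩, by linarith [ha.2], by linarith⟩
  have hinf : (Set.Ioo (max 0 (a - δ)) (min 1 (a + δ))).Infinite := Set.Ioo_infinite hcd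
  obtain ⟨z, hz, hzS⟩ := (hinf.diff S.finite_toSet).nonempty
  obtain ⟨hz1, hz2⟩ := hz
  have h1 := le_max_left 0 (a - δ)
  have h2 := le_max_right 0 (a - δ)
  have h3 := min_le_left 1 (a + δ)
  have h4 := min_le_right 1 (a + δ)
  exact ⟨z, ⟨by linarith, by linarith⟩, abs_sub_lt_iff.2 ⟨by linarith, by linarith⟩,
    by simpa using hzS⟩

variable (a : ℕ → ℝ) (ha : ∀ m, a m ∈ Icc (0:ℝ) 1)

def xlist : ℕ → List ℝ
  | 0 => []
  | (m+1) => xlist m ++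
      [Classical.choose (exists_pt (a m) (1/(m+1)) (ha m) (by positivity) (xlist m).toFinset)]

def xseq (m : ℕ) : ℝ :=
  Classical.choose (exists_pt (a m) (1/(m+1)) (ha m) (by positivity) (xlist a ha m).toFinset)

lemma xlist_succ (m : ℕ) : xlist a ha (m+1) = xlist a ha m ++ [xseq a ha m] := rfl

lemma xseq_spec (m : ℕ) : xseq a ha m ∈ Icc (0:ℝ) 1 ∧ |xseq a ha m - a m| < 1/(m+1) ∧
    xseq a ha m ∉ (xlist a ha m).toFinset :=
  Classical.choose_spec (exists_pt (a m) (1/(m+1)) (ha m) (by positivity) (xlist a ha m).toFinset)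

lemma mem_xlist {j m : ℕ} (h : j < m) : xseq a ha j ∈ xlist a ha m := by
  induction m with
  | zero => omega
  | succ m ih =>
    rw [xlist_succ]
    rcases Nat.lt_succ_iff_lt_or_eq.1 h with h' | h'
    · exact List.mem_append_left _ (ih h')
    · subst h'; exact List.mem_append_right _ (List.mem_singleton_self _)

lemma xseq_inj : Function.Injective (xseq a ha) := by
  intro j m hjm
  by_contra hne
  rcases Nat.lt_or_ge j m with h | h
  · exact (xseq_spec a ha m).2.2 (List.mem_toFinset.2 (hjm ▸ mem_xlist a ha h))
  · have h' : m < j := by omega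
    exact (xseq_spec a ha j).2.2 (List.mem_toFinset.2 (hjm ▸ mem_xlist a ha h'))

theorem stmt1 (T : Set (ℝ × ℝ)) (hTc : IsClosed T)
    (hT : ∀ p ∈ T, p.1 ∈ Icc (0:ℝ) 1) :
    ∃ A : Set ℝ, A ⊆ Icc 0 1 ∧ A.Countable ∧
      ∃ f : ℝ → ℝ, accPts (graphOn A f) = T ∧
        ∀ ε > (0:ℝ), {p : ℝ × ℝ | p ∈ graphOn A f ∧ ε < infDist p T}.Finite := by
  rcases T.eq_empty_or_nonempty with rfl | hne
  · refine ⟨∅, empty_subset _, countable_empty, fun _ => 0, ?_, ?_⟩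
    · have hg : graphOn ∅ (fun _ => (0:ℝ)) = ∅ := by ext p; simp [_root_.graphOn]
      rw [hg]
      ext p
      simp only [accPts, mem_setOf_eq, mem_empty_iff_false, iff_false]
      intro h
      rw [principal_empty] at h
      exact h.ne (by simp [inf_bot_eq])
    · intro ε hε
      convert Set.finite_empty
      ext p
      simp [_root_.graphOn]
  · classical
    haveI : Nonempty T := hne.to_subtype
    set u : ℕ → ℝ × ℝ := fun n => (TopologicalSpace.denseSeq T n : ℝ × ℝ) with hu
    have huT : ∀ n, u n ∈ T := fun n => (TopologicalSpace.denseSeq T n).2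
    have hudense : ∀ t ∈ T, ∀ ε > (0:ℝ), ∃ n, dist (u n) t < ε := by
      intro t ht ε hε
      obtain ⟨n, hn⟩ := (TopologicalSpace.denseRange_denseSeq T).exists_dist_lt ⟨t, ht⟩ hε
      exact ⟨n, by rw [dist_comm]; simpa [Subtype.dist_eq] using hn⟩
    set a : ℕ → ℝ := fun m => (u m.unpair.1).1 with haa
    have ha : ∀ m, a m ∈ Icc (0:ℝ) 1 := fun m => hT _ (huT _)
    set b : ℕ → ℝ := fun m => (u m.unpair.1).2 with hb
    set x : ℕ → ℝ := xseq a ha with hx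
    have hxinj : Function.Injective x := xseq_inj a ha
    set f : ℝ → ℝ := fun t => if h : ∃ m, x m = t then b h.choose else 0 with hfdef
    have hf : ∀ m, f (x m) = b m := by
      intro m
      have h : ∃ j, x j = x m := ⟨m, rfl⟩
      have hcm : h.choose = m := hxinj h.choose_spec
      simp only [hfdef, dif_pos h, hcm]
    set A : Set ℝ := Set.range x with hA
    have hgraph : graphOn A f = Set.range (fun m => ((x m, b m) : ℝ × ℝ)) := by
      ext p
      constructor
      · rintro ⟨⟨m, hm⟩, hp2⟩
        refine ⟨m, ?_⟩
        have : p = (x m, b m) := by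
          rw [show p = (p.1, p.2) from rfl, ← hm]
          exact Prod.ext rfl (by rw [hp2, ← hm, hf m])
        exact this.symm
      · rintro ⟨m, rfl⟩
        exact ⟨⟨m, rfl⟩, (hf m).symm⟩
    have hdist : ∀ m, dist ((x m, b m) : ℝ × ℝ) (u m.unpair.1) < 1/(m+1) := by
      intro m
      rw [Prod.dist_eq]
      have h2 : dist (b m) (u m.unpair.1).2 = 0 := by simp [hb]
      rw [h2, max_eq_left dist_nonneg, Real.dist_eq]
      exact (xseq_spec a ha m).2.1
    have hinfd : ∀ m, infDist ((x m, b m) : ℝ × ℝ) T < 1/(m+1) :=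
      fun m => lt_of_le_of_lt (infDist_le_dist_of_mem (huT _)) (hdist m)
    have hfin : ∀ ε > (0:ℝ), {p : ℝ × ℝ | p ∈ graphOn A f ∧ ε < infDist p T}.Finite := by
      intro ε hε
      have hsub : {p : ℝ × ℝ | p ∈ graphOn A f ∧ ε < infDist p T} ⊆
          (fun m => ((x m, b m) : ℝ × ℝ)) '' {m : ℕ | (m : ℝ) < 1/ε} := by
        rintro p ⟨hp, hplt⟩
        rw [hgraph] at hp
        obtain ⟨m, rfl⟩ := hp
        refine ⟨m, ?_, rfl⟩
        have h1 : ε < 1/((m:ℝ)+1) := hplt.trans (hinfd m)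
        have hm1 : (0:ℝ) < (m:ℝ)+1 := by positivity
        rw [lt_div_iff₀ hm1] at h1
        rw [mem_setOf_eq, lt_div_iff₀ hε]
        nlinarith
      refine Set.Finite.subset (Set.Finite.image _ ?_) hsub
      exact Set.Finite.subset (Set.finite_Iio ⌈1/ε⌉₊) (fun m hm => mem_Iio.2 (Nat.lt_ceil.2 hm))
    have hsubT : accPts (graphOn A f) ⊆ T := by
      intro p hp
      rw [accPts, mem_setOf_eq, accPt_iff_nhds] at hp
      have key : ∀ δ > (0:ℝ), infDist p T ≤ δ := by
        intro δ hδ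
        have hδ3 : (0:ℝ) < δ/3 := by linarith
        have hF := hfin (δ/3) hδ3
        set F := {q : ℝ × ℝ | q ∈ graphOn A f ∧ δ/3 < infDist q T} with hFdef
        have hU : (Metric.ball p (δ/3) ∩ (F \ {p})ᶜ) ∈ 𝓝 p := by
          refine Filter.inter_mem (Metric.ball_mem_nhds _ hδ3) ?_
          refine IsOpen.mem_nhds (hF.diff.isClosed.isOpen_compl) ?_
          simp
        obtain ⟨q, ⟨⟨hqball, hqF⟩, hqG⟩, hqp⟩ := hp _ hU
        have hq2 : infDist q T ≤ δ/3 := by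
          by_contra hcon
          push_neg at hcon
          exact hqF ⟨⟨hqG, hcon⟩, hqp⟩
        have hdq : dist p q < δ/3 := by
          rw [dist_comm]; exact Metric.mem_ball.1 hqball
        calc infDist p T ≤ infDist q T + dist p q := infDist_le_infDist_add_dist
          _ ≤ δ/3 + δ/3 := by linarith
          _ ≤ δ := by linarith
      have h0 : infDist p T ≤ 0 := by
        by_contra h
        push_neg at h
        have := key (infDist p T / 2) (by linarith)
        linarith
      exact (hTc.mem_iff_infDist_zero hne).2 (le_antisymm h0 infDist_nonneg)
    have hsupT : T ⊆ accPts (graphOn A f) := by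
      intro t ht
      rw [accPts, mem_setOf_eq, accPt_iff_nhds]
      intro U hU
      obtain ⟨ε, hε, hball⟩ := Metric.mem_nhds_iff.1 hU
      obtain ⟨n, hn⟩ := hudense t ht (ε/2) (by linarith)
      obtain ⟨K, hK⟩ : ∃ K : ℕ, 1/((K:ℝ)+1) < ε/2 := by
        obtain ⟨K, hK⟩ := exists_nat_gt (2/ε)
        refine ⟨K, ?_⟩
        rw [div_lt_iff₀ (by positivity)]
        rw [div_lt_iff₀ hε] at hK
        nlinarith
      have hpt : ∀ k, K ≤ k → dist ((x (Nat.pair n k), b (Nat.pair n k)) : ℝ × ℝ) t < ε := by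
        intro k hk
        have h1 : dist ((x (Nat.pair n k), b (Nat.pair n k)) : ℝ × ℝ) (u n) < ε/2 := by
          have h2 := hdist (Nat.pair n k)
          rw [Nat.unpair_pair] at h2
          refine lt_of_lt_of_le (lt_of_lt_of_le h2 ?_) hK.le
          have hkK : ((K:ℝ)+1) ≤ (Nat.pair n k : ℝ) + 1 := by
            have := (Nat.right_le_pair n k).trans' hk
            exact_mod_cast by omega
          exact one_div_le_one_div_of_le (by positivity) hkK
        calc dist ((x (Nat.pair n k), b (Nat.pair n k)) : ℝ × ℝ) t
            ≤ dist ((x (Nat.pair n k), b (Nat.pair n k)) : ℝ × ℝ) (u n) + dist (u n) t :=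
              dist_triangle _ _ _
          _ < ε/2 + ε/2 := add_lt_add h1 hn
          _ = ε := by ring
      have hxne : x (Nat.pair n K) ≠ x (Nat.pair n (K+1)) := by
        intro h
        have := hxinj h
        have := Nat.pair_eq_pair.1 this
        omega
      by_cases hcase : ((x (Nat.pair n K), b (Nat.pair n K)) : ℝ × ℝ) = t
      · refine ⟨(x (Nat.pair n (K+1)), b (Nat.pair n (K+1))),
          ⟨hball (Metric.mem_ball.2 (hpt (K+1) (by omega))), ?_⟩, ?_⟩
        · rw [hgraph]; exact ⟨_, rfl⟩
        · intro h
          exact hxne (by rw [← hcase] at h; exact (congrArg Prod.fst h).symm)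
      · exact ⟨(x (Nat.pair n K), b (Nat.pair n K)),
          ⟨hball (Metric.mem_ball.2 (hpt K le_rfl)), by rw [hgraph]; exact ⟨_, rfl⟩⟩, hcase⟩
    refine ⟨A, ?_, countable_range x, f, Set.Subset.antisymm hsubT hsupT, hfin⟩
    rintro y ⟨m, rfl⟩
    exact (xseq_spec a ha m).1
end
end

section
/- If f : [0,1] → ℝ is any function and L_f denotes the set of accumulation points of its graph in ℝ², then the set C = {x ∈ [0,1] : L_f ∩ ({x} × ℝ) = ∅} is countable. -/
open Set Filter Topology Metric

noncomputable section

theorem stmt2 (f : ℝ → ℝ) :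
    {x ∈ Icc (0:ℝ) 1 | ∀ y : ℝ, (x, y) ∉ accPts (graphOn (Icc 0 1) f)}.Countable := by
  set S : ℕ → ℕ → Set ℝ := fun m k =>
    {x | x ∈ Icc (0:ℝ) 1 ∧ |f x| ≤ m ∧
      ∀ x' ∈ Icc (0:ℝ) 1, x' ≠ x → |x' - x| < 1 / (k + 1) → (m : ℝ) < |f x'|} with hS
  have hcnt : ∀ m k, (S m k).Countable := by
    intro m k
    have hinj : InjOn (fun x : ℝ => ⌊(k + 1 : ℝ) * x⌋) (S m k) := by
      intro a ha b hb hab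
      by_contra hne
      have h1 : |(k + 1 : ℝ) * a - (k + 1 : ℝ) * b| < 1 :=
        Int.abs_sub_lt_one_of_floor_eq_floor hab
      have hk : (0:ℝ) < k + 1 := by positivity
      have h2 : |a - b| < 1 / (k + 1) := by
        rw [lt_div_iff₀ hk, mul_comm]
        calc (k + 1 : ℝ) * |a - b| = |(k + 1 : ℝ) * a - (k + 1 : ℝ) * b| := by
              rw [← mul_sub, abs_mul, abs_of_pos hk]
          _ < 1 := h1
      have := hb.2.2 a ha.1 hne h2
      exact absurd ha.2.1 (not_le.mpr this)
    exact (mapsTo_univ _ _).countable_of_injOn hinj countable_univ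
  have hsub : {x ∈ Icc (0:ℝ) 1 | ∀ y : ℝ, (x, y) ∉ accPts (graphOn (Icc 0 1) f)} ⊆
      ⋃ m, ⋃ k, S m k := by
    rintro x ⟨hx01, hx⟩
    set m : ℕ := ⌈|f x|⌉₊ with hm
    have hfm : |f x| ≤ m := Nat.le_ceil _
    simp only [mem_iUnion]
    refine ⟨m, ?_⟩
    by_contra hk
    push_neg at hk
    have hk' : ∀ k : ℕ, ∃ x' ∈ Icc (0:ℝ) 1, x' ≠ x ∧ |x' - x| < 1 / (k + 1) ∧ |f x'| ≤ m := by
      intro k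
      have := hk k
      simp only [hS, mem_setOf_eq, hx01, hfm, true_and] at this
      push_neg at this
      obtain ⟨x', h1, h2, h3, h4⟩ := this
      exact ⟨x', h1, h2, h3, h4⟩
    choose u hu hune hud hub using hk'
    -- the sequence of graph points
    set p : ℕ → ℝ × ℝ := fun k => (u k, f (u k)) with hp
    have hpK : ∀ k, p k ∈ (Icc (0:ℝ) 1) ×ˢ (Icc (-(m:ℝ)) m) := by
      intro k
      refine ⟨hu k, ?_⟩
      rw [mem_Icc, ← abs_le]
      exact hub k
    have hKc : IsCompact ((Icc (0:ℝ) 1) ×ˢ (Icc (-(m:ℝ)) m)) :=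
      isCompact_Icc.prod isCompact_Icc
    obtain ⟨q, hqK, φ, hφ, hconv⟩ := hKc.tendsto_subseq hpK
    have hu_tendsto : Tendsto u atTop (𝓝 x) := by
      rw [tendsto_iff_dist_tendsto_zero]
      apply squeeze_zero (fun k => dist_nonneg) (fun k => (hud k).le.trans (le_refl _))
      · exact tendsto_one_div_add_atTop_nhds_zero_nat
    have hq1 : q.1 = x := by
      have h1 : Tendsto (fun k => (p (φ k)).1) atTop (𝓝 q.1) :=
        (continuous_fst.tendsto q).comp hconv
      have h2 : Tendsto (fun k => (p (φ k)).1) atTop (𝓝 x) :=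
        hu_tendsto.comp hφ.tendsto_atTop
      exact tendsto_nhds_unique h1 h2
    apply hx q.2
    rw [accPts, mem_setOf_eq, accPt_iff_nhds]
    intro U hU
    have hq : (x, q.2) = q := Prod.ext hq1.symm rfl
    rw [hq] at hU
    have : ∀ᶠ k in atTop, p (φ k) ∈ U := hconv.eventually hU
    obtain ⟨k, hkU⟩ := this.exists
    refine ⟨p (φ k), ⟨hkU, hu (φ k), rfl⟩, ?_⟩
    intro heq
    apply hune (φ k)
    have h5 : (p (φ k)).1 = (x, q.2).1 := by rw [heq]
    exact h5
  exact (Set.countable_iUnion fun m => Set.countable_iUnion (hcnt m)).mono hsub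
end
end

section
/- There exists a bounded Baire class 2 function f : [0,1] → ℝ whose set of accumulation points of its graph equals T if and only if T is compact and T ∩ ({x} × ℝ) is nonempty for every x ∈ [0,1]. -/
open Set Filter Topology Metric

noncomputable section

/-! ### Auxiliary lemmas -/

lemma accPts_closed (G : Set (ℝ × ℝ)) : IsClosed (accPts G) := by
  rw [← isOpen_compl_iff]
  rw [isOpen_iff_mem_nhds]
  intro p hp
  simp only [mem_compl_iff, accPts, mem_setOf_eq, accPt_iff_nhds] at hp
  push_neg at hp
  obtain ⟨U, hU, hUp⟩ := hp
  obtain ⟨V, hVU, hVopen, hpV⟩ := _root_.mem_nhds_iff.1 hU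
  have : V ⊆ (accPts G)ᶜ := by
    intro q hq
    simp only [mem_compl_iff, accPts, mem_setOf_eq, accPt_iff_nhds]
    push_neg
    by_cases hqp : q = p
    · subst hqp; exact ⟨U, hU, hUp⟩
    · refine ⟨V \ {p}, ?_, ?_⟩
      · exact (hVopen.sdiff isClosed_singleton).mem_nhds ⟨hq, hqp⟩
      · rintro y ⟨⟨hyV, hyp⟩, hyG⟩
        exact absurd (hUp y ⟨hVU hyV, hyG⟩) hyp
  exact Filter.mem_of_superset (hVopen.mem_nhds hpV) this

lemma accPts_subset_closure (G : Set (ℝ × ℝ)) : accPts G ⊆ closure G :=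
  fun _ hp => mem_closure_iff_clusterPt.2 hp.clusterPt

lemma baire1_add {f1 f2 : ℝ → ℝ} (h1 : Baire1 f1) (h2 : Baire1 f2) :
    Baire1 (fun x => f1 x + f2 x) := by
  obtain ⟨g1, hc1, ht1⟩ := h1
  obtain ⟨g2, hc2, ht2⟩ := h2
  exact ⟨fun n x => g1 n x + g2 n x, fun n => (hc1 n).add (hc2 n),
    fun x hx => (ht1 x hx).add (ht2 x hx)⟩

lemma baire1_point (c x0 : ℝ) : Baire1 (fun x => if x = x0 then c else 0) := by
  refine ⟨fun n x => c * max 0 (1 - (n + 1) * |x - x0|), ?_, ?_⟩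
  · intro n
    apply Continuous.continuousOn
    exact continuous_const.mul (continuous_const.max (continuous_const.sub
      (continuous_const.mul ((continuous_id.sub continuous_const).abs))))
  · intro x _
    simp only []
    by_cases h : x = x0
    · subst h
      simp only [sub_self, abs_zero, mul_zero, sub_zero, if_pos rfl]
      rw [show max (0:ℝ) 1 = 1 by norm_num, ]
      simpa using tendsto_const_nhds
    · simp only [if_neg h]
      have hd : 0 < |x - x0| := abs_pos.2 (sub_ne_zero.2 h)
      obtain ⟨N, hN⟩ := exists_nat_gt (1 / |x - x0|)
      have : ∀ n ≥ N, c * max 0 (1 - ((n:ℝ) + 1) * |x - x0|) = 0 := by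
        intro n hn
        have h1 : (1:ℝ) ≤ ((n:ℝ) + 1) * |x - x0| := by
          rw [div_lt_iff₀ hd] at hN
          have : (N:ℝ) ≤ (n:ℝ) := Nat.cast_le.2 hn
          nlinarith
        rw [max_eq_left (by linarith), mul_zero]
      apply tendsto_const_nhds.congr'
      filter_upwards [eventually_ge_atTop N] with n hn
      exact (this n hn).symm

/-- The inf selection from `T`. -/
def gsel (T : Set (ℝ × ℝ)) (x : ℝ) : ℝ := sInf {y | (x, y) ∈ T}

lemma S_bdd (T : Set (ℝ × ℝ)) (C : ℝ) (hbd : ∀ p ∈ T, |p.2| ≤ C) (x : ℝ) :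
    BddBelow {y | (x, y) ∈ T} := by
  refine ⟨-C, fun y hy => ?_⟩
  have := hbd (x, y) hy
  simp only at this
  linarith [(abs_le.1 this).1]

lemma gsel_mem (T : Set (ℝ × ℝ)) (C : ℝ) (hc : IsCompact T)
    (hbd : ∀ p ∈ T, |p.2| ≤ C) (hfull : ∀ x ∈ Icc (0:ℝ) 1, ∃ y, (x, y) ∈ T)
    {x : ℝ} (hx : x ∈ Icc (0:ℝ) 1) : (x, gsel T x) ∈ T := by
  have hS : IsClosed {y | (x, y) ∈ T} := by
    have : {y | (x, y) ∈ T} = (fun y => ((x:ℝ), y)) ⁻¹' T := rfl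
    rw [this]
    exact hc.isClosed.preimage (Continuous.prodMk_right x)
  exact hS.csInf_mem (hfull x hx) (S_bdd T C hbd x)

lemma gsel_le (T : Set (ℝ × ℝ)) (C : ℝ) (hbd : ∀ p ∈ T, |p.2| ≤ C)
    {x y : ℝ} (hy : (x, y) ∈ T) : gsel T x ≤ y :=
  csInf_le (S_bdd T C hbd x) hy

/-- Moreau-Yosida approximants. -/
def my (T : Set (ℝ × ℝ)) (k : ℕ) (x : ℝ) : ℝ :=
  sInf ((fun p : ℝ × ℝ => p.2 + k * |x - p.1|) '' T)

lemma gsel_baire1 (T : Set (ℝ × ℝ)) (C : ℝ) (hc : IsCompact T)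
    (hbd : ∀ p ∈ T, |p.2| ≤ C) (hfull : ∀ x ∈ Icc (0:ℝ) 1, ∃ y, (x, y) ∈ T)
    (hne : T.Nonempty) : Baire1 (gsel T) := by
  have himgne : ∀ k x, ((fun p : ℝ × ℝ => p.2 + (k:ℝ) * |x - p.1|) '' T).Nonempty :=
    fun k x => hne.image _
  have himgbdd : ∀ (k : ℕ) (x : ℝ),
      BddBelow ((fun p : ℝ × ℝ => p.2 + (k:ℝ) * |x - p.1|) '' T) := by
    intro k x
    refine ⟨-C, ?_⟩
    rintro _ ⟨p, hp, rfl⟩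
    have h1 := (abs_le.1 (hbd p hp)).1
    have h2 : (0:ℝ) ≤ (k:ℝ) * |x - p.1| := by positivity
    simp only
    linarith
  have hle : ∀ (k : ℕ) (x : ℝ) (p : ℝ × ℝ), p ∈ T → my T k x ≤ p.2 + k * |x - p.1| :=
    fun k x p hp => csInf_le (himgbdd k x) ⟨p, hp, rfl⟩
  have hub : ∀ (k : ℕ) {x : ℝ}, x ∈ Icc (0:ℝ) 1 → my T k x ≤ gsel T x := by
    intro k x hx
    have hm := gsel_mem T C hc hbd hfull hx
    have := hle k x _ hm
    simpa using this
  have hmono : ∀ x, Monotone fun k => my T k x := by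
    intro x
    apply monotone_nat_of_le_succ
    intro k
    show my T k x ≤ my T (k+1) x
    conv_rhs => rw [my]
    apply le_csInf (himgne _ x)
    rintro _ ⟨p, hp, rfl⟩
    simp only
    calc my T k x ≤ p.2 + k * |x - p.1| := hle k x p hp
      _ ≤ p.2 + (↑(k+1):ℝ) * |x - p.1| := by
          push_cast
          nlinarith [abs_nonneg (x - p.1)]
  have hlip : ∀ k : ℕ, LipschitzWith k (my T k) := by
    intro k
    have key : ∀ x y : ℝ, my T k x - k * |x - y| ≤ my T k y := by
      intro x y
      rw [sub_le_iff_le_add]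
      have heq : my T k y + ↑k * |x - y| =
          sInf ((fun e => e + (k:ℝ) * |x - y|) '' ((fun p : ℝ × ℝ => p.2 + (k:ℝ) * |y - p.1|) '' T)) := by
        have := Monotone.map_csInf_of_continuousAt
          (f := fun e : ℝ => e + (k:ℝ) * |x - y|)
          (A := (fun p : ℝ × ℝ => p.2 + (k:ℝ) * |y - p.1|) '' T)
          ((continuous_id.add continuous_const).continuousAt)
          (fun a b hab => by simpa using hab)
          (himgne k y) (himgbdd k y)
        exact this
      rw [show my T k y = sInf ((fun p : ℝ × ℝ => p.2 + (k:ℝ) * |y - p.1|) '' T) from rfl] at heq ⊢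
      rw [heq]
      apply le_csInf ((himgne k y).image _)
      rintro _ ⟨_, ⟨p, hp, rfl⟩, rfl⟩
      simp only
      calc my T k x ≤ p.2 + k * |x - p.1| := hle k x p hp
        _ ≤ p.2 + ↑k * |y - p.1| + ↑k * |x - y| := by
            have : |(x:ℝ) - p.1| ≤ |y - p.1| + |x - y| := by
              calc |(x:ℝ) - p.1| = |(x - y) + (y - p.1)| := by ring_nf
                _ ≤ |x - y| + |y - p.1| := abs_add_le _ _
                _ = |y - p.1| + |x - y| := by ring
            nlinarith [Nat.cast_nonneg (α := ℝ) k]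
    apply LipschitzWith.of_dist_le_mul
    intro x y
    rw [Real.dist_eq, Real.dist_eq, abs_sub_le_iff]
    push_cast
    constructor
    · linarith [key x y]
    · have := key y x
      rw [abs_sub_comm y x] at this
      linarith
  refine ⟨fun k => my T k, fun k => ((hlip k).continuous).continuousOn, ?_⟩
  intro x hx
  have hbdd : BddAbove (range fun k => my T k x) :=
    ⟨gsel T x, by rintro _ ⟨k, rfl⟩; exact hub k hx⟩
  have htend := tendsto_atTop_ciSup (hmono x) hbdd
  suffices hsup : ⨆ k, my T k x = gsel T x by rwa [hsup] at htend
  apply le_antisymm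
  · exact ciSup_le fun k => hub k hx
  · have hchoice : ∀ k : ℕ, ∃ p : ℝ × ℝ, p ∈ T ∧
        p.2 + k * |x - p.1| < my T k x + 1 / (k + 1) := by
      intro k
      have hlt : my T k x < my T k x + 1 / (k + 1) := by
        have : (0:ℝ) < 1 / (k + 1) := by positivity
        linarith
      obtain ⟨e, ⟨p, hp, rfl⟩, hee⟩ := exists_lt_of_csInf_lt (himgne k x) hlt
      exact ⟨p, hp, hee⟩
    choose p hpT hplt using hchoice
    set L := ⨆ k, my T k x with hL
    have hmyleL : ∀ k, my T k x ≤ L := fun k => le_ciSup hbdd k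
    have hdist : ∀ k : ℕ, 1 ≤ k → |x - (p k).1| ≤ (gsel T x + 1 + C) / k := by
      intro k hk
      have hkpos : (0:ℝ) < k := by exact_mod_cast hk
      rw [le_div_iff₀ hkpos]
      have h1 : (k:ℝ) * |x - (p k).1| < my T k x + 1 / (k + 1) - (p k).2 := by
        linarith [hplt k]
      have h2 : my T k x ≤ gsel T x := hub k hx
      have h3 : 1 / ((k:ℝ) + 1) ≤ 1 := by
        rw [div_le_one (by positivity)]; linarith
      have h4 : -(p k).2 ≤ C := by linarith [(abs_le.1 (hbd (p k) (hpT k))).1]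
      rw [mul_comm]
      linarith
    have hx1 : Tendsto (fun k => (p k).1) atTop (𝓝 x) := by
      rw [tendsto_iff_dist_tendsto_zero]
      apply squeeze_zero' (Filter.Eventually.of_forall fun k => dist_nonneg)
        (g := fun k : ℕ => (gsel T x + 1 + C) / k)
      · filter_upwards [eventually_ge_atTop 1] with k hk
        rw [Real.dist_eq, abs_sub_comm]
        exact hdist k hk
      · exact tendsto_const_div_atTop_nhds_zero_nat _
    obtain ⟨q, hqT, φ, hφ, hφt⟩ := hc.tendsto_subseq hpT
    have hq1 : q.1 = x := by
      have h1 : Tendsto (fun j => (p (φ j)).1) atTop (𝓝 q.1) :=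
        (continuous_fst.tendsto q).comp hφt
      have h2 : Tendsto (fun j => (p (φ j)).1) atTop (𝓝 x) :=
        hx1.comp hφ.tendsto_atTop
      exact tendsto_nhds_unique h1 h2
    have hgq : gsel T x ≤ q.2 := by
      apply gsel_le T C hbd
      have : ((x:ℝ), q.2) = q := by rw [← hq1]
      rw [this]
      exact hqT
    have hq2L : q.2 ≤ L := by
      have h1 : Tendsto (fun j => (p (φ j)).2) atTop (𝓝 q.2) :=
        (continuous_snd.tendsto q).comp hφt
      have h2 : Tendsto (fun j : ℕ => L + 1 / ((φ j : ℝ) + 1)) atTop (𝓝 (L + 0)) := by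
        apply tendsto_const_nhds.add
        exact tendsto_one_div_add_atTop_nhds_zero_nat.comp hφ.tendsto_atTop
      rw [add_zero] at h2
      apply le_of_tendsto_of_tendsto' h1 h2
      intro j
      have h3 := hplt (φ j)
      have h4 : (0:ℝ) ≤ (φ j : ℝ) * |x - (p (φ j)).1| := by positivity
      have h5 := hmyleL (φ j)
      linarith
    linarith

lemma dense_coset_pick (n : ℕ) (a l r : ℝ) (hlr : l < r) :
    ∃ x : ℝ, (∃ q : ℚ, x = q + n * Real.sqrt 2) ∧ x ∈ Ioo l r ∧ x ≠ a := by
  have hdense : Dense (range (fun q : ℚ => (q : ℝ) + n * Real.sqrt 2)) := by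
    have h1 : DenseRange (fun q : ℚ => (q : ℝ)) := Rat.denseRange_cast
    have h2 : DenseRange ((fun x : ℝ => x + (n : ℝ) * Real.sqrt 2) ∘ (fun q : ℚ => (q : ℝ))) :=
      DenseRange.comp ((Homeomorph.addRight ((n : ℝ) * Real.sqrt 2)).surjective.denseRange)
        h1 (continuous_id.add continuous_const)
    exact h2
  have hopen : IsOpen (Ioo l r \ {a}) := isOpen_Ioo.sdiff isClosed_singleton
  have hnonempty : (Ioo l r \ {a}).Nonempty :=
    ((Set.Ioo_infinite hlr).diff (Set.finite_singleton a)).nonempty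
  obtain ⟨x, hx1, hx2⟩ := hdense.exists_mem_open hopen hnonempty
  obtain ⟨q, rfl⟩ := hx1
  exact ⟨_, ⟨q, rfl⟩, hx2.1, hx2.2⟩

lemma exists_dense_seq_in (T : Set (ℝ × ℝ)) (hc : IsCompact T) (hne : T.Nonempty) :
    ∃ u : ℕ → ℝ × ℝ, (∀ n, u n ∈ T) ∧ ∀ p ∈ T, ∀ ε > 0, ∃ n, dist p (u n) < ε := by
  haveI := isCompact_iff_compactSpace.mp hc
  haveI : Nonempty T := hne.to_subtype
  obtain ⟨v, hv⟩ := TopologicalSpace.exists_dense_seq T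
  refine ⟨fun n => (v n : ℝ × ℝ), fun n => (v n).2, ?_⟩
  intro p hp ε hε
  obtain ⟨n, hn⟩ := Metric.denseRange_iff.1 hv ⟨p, hp⟩ ε hε
  refine ⟨n, ?_⟩
  rw [Subtype.dist_eq] at hn
  exact hn

lemma forward_dir (T : Set (ℝ × ℝ)) (f : ℝ → ℝ) (M : ℝ)
    (hM : ∀ x ∈ Icc (0:ℝ) 1, |f x| ≤ M) (hacc : accPts (graphOn (Icc 0 1) f) = T) :
    IsCompact T ∧ ∀ x ∈ Icc (0:ℝ) 1, ∃ y, (x, y) ∈ T := by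
  set G := graphOn (Icc 0 1) f with hG
  have hGsub : G ⊆ Icc (0:ℝ) 1 ×ˢ Icc (-M) M := by
    rintro ⟨x, y⟩ ⟨hx, hy⟩
    exact ⟨hx, hy ▸ abs_le.1 (hM x hx)⟩
  have hK : IsCompact (Icc (0:ℝ) 1 ×ˢ Icc (-M) M) := isCompact_Icc.prod isCompact_Icc
  have hTsub : T ⊆ Icc (0:ℝ) 1 ×ˢ Icc (-M) M := by
    rw [← hacc]
    intro p hp
    have := accPts_subset_closure G hp
    have hcl : closure G ⊆ Icc (0:ℝ) 1 ×ˢ Icc (-M) M :=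
      closure_minimal hGsub (hK.isClosed)
    exact hcl this
  constructor
  · exact hK.of_isClosed_subset (hacc ▸ accPts_closed G) hTsub
  · intro x hx
    -- choose sequence xk -> x, xk ≠ x, in Icc
    set e : ℕ → ℝ := fun k => min (1 / (k + 1)) (1 / 2) with he
    have hepos : ∀ k, 0 < e k := fun k =>
      lt_min (by positivity) (by norm_num)
    have hele : ∀ k, e k ≤ 1 / (k + 1) := fun k => min_le_left _ _
    have hehalf : ∀ k, e k ≤ 1 / 2 := fun k => min_le_right _ _
    set xs : ℕ → ℝ := fun k => if x ≤ 1/2 then x + e k else x - e k with hxs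
    have hxsIcc : ∀ k, xs k ∈ Icc (0:ℝ) 1 := by
      intro k
      simp only [hxs]
      split_ifs with h
      · constructor
        · linarith [hx.1, (hepos k).le]
        · linarith [hehalf k]
      · constructor
        · push_neg at h; linarith [hehalf k]
        · linarith [hx.2, (hepos k).le]
    have hxsne : ∀ k, xs k ≠ x := by
      intro k
      simp only [hxs]
      split_ifs with h
      · intro hh; nlinarith [hepos k]
      · intro hh; nlinarith [hepos k]
    have hxst : Tendsto xs atTop (𝓝 x) := by
      have h1 : Tendsto (fun k : ℕ => 1 / ((k:ℝ) + 1)) atTop (𝓝 0) :=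
        tendsto_one_div_add_atTop_nhds_zero_nat
      have het : Tendsto e atTop (𝓝 0) := by
        apply squeeze_zero (fun k => (hepos k).le) hele h1
      simp only [hxs]
      split_ifs with h
      · have := tendsto_const_nhds (x := x) (f := atTop (α := ℕ)) |>.add het
        simpa using this
      · have := tendsto_const_nhds (x := x) (f := atTop (α := ℕ)) |>.sub het
        simpa using this
    set q : ℕ → ℝ × ℝ := fun k => (xs k, f (xs k)) with hq
    have hqG : ∀ k, q k ∈ G := fun k => ⟨hxsIcc k, rfl⟩
    have hqK : ∀ k, q k ∈ Icc (0:ℝ) 1 ×ˢ Icc (-M) M := fun k => hGsub (hqG k)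
    obtain ⟨a, haK, φ, hφ, hφt⟩ := hK.tendsto_subseq hqK
    have ha1 : a.1 = x := by
      have h1 : Tendsto (fun k => (q (φ k)).1) atTop (𝓝 a.1) :=
        (continuous_fst.tendsto a).comp hφt
      have h2 : Tendsto (fun k => (q (φ k)).1) atTop (𝓝 x) :=
        hxst.comp hφ.tendsto_atTop
      exact tendsto_nhds_unique h1 h2
    have haAcc : a ∈ accPts G := by
      simp only [accPts, mem_setOf_eq, accPt_iff_nhds]
      intro U hU
      obtain ⟨k, hk⟩ := (hφt.eventually (eventually_mem_nhds_iff.mpr hU)).exists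
      refine ⟨q (φ k), ⟨mem_of_mem_nhds hk, hqG (φ k)⟩, ?_⟩
      intro hqa
      apply hxsne (φ k)
      rw [← ha1, ← hqa]
    refine ⟨a.2, ?_⟩
    have : ((x : ℝ), a.2) = a := by
      rw [← ha1]
    rw [this, ← hacc]
    exact haAcc


theorem stmt7 (T : Set (ℝ × ℝ)) (hT : ∀ p ∈ T, p.1 ∈ Icc (0:ℝ) 1) :
    (∃ f : ℝ → ℝ, Baire2 f ∧ (∃ M, ∀ x ∈ Icc (0:ℝ) 1, |f x| ≤ M) ∧
        accPts (graphOn (Icc 0 1) f) = T) ↔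
      (IsCompact T ∧ ∀ x ∈ Icc (0:ℝ) 1, ∃ y, (x, y) ∈ T) := by
  constructor
  · rintro ⟨f, _, ⟨M, hM⟩, hacc⟩
    exact forward_dir T f M hM hacc
  · rintro ⟨hc, hfull⟩
    classical
    obtain ⟨C0, hC0⟩ := isBounded_iff_forall_norm_le.1 hc.isBounded
    set C := max C0 0 with hC
    have hbd : ∀ p ∈ T, |p.2| ≤ C := by
      intro p hp
      calc |p.2| = ‖p.2‖ := (Real.norm_eq_abs _).symm
        _ ≤ ‖p‖ := norm_snd_le p
        _ ≤ C0 := hC0 p hp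
        _ ≤ C := le_max_left _ _
    have hne : T.Nonempty := by
      obtain ⟨y, hy⟩ := hfull 0 ⟨le_refl 0, by norm_num⟩
      exact ⟨_, hy⟩
    have hgmem : ∀ x ∈ Icc (0:ℝ) 1, (x, gsel T x) ∈ T :=
      fun x hx => gsel_mem T C hc hbd hfull hx
    obtain ⟨u, huT, hudense⟩ := exists_dense_seq_in T hc hne
    set v : ℕ → ℝ × ℝ := fun n => u (Nat.unpair n).1 with hv
    have hvT : ∀ n, v n ∈ T := fun n => huT _
    set a : ℕ → ℝ := fun n => (v n).1 with ha
    set b : ℕ → ℝ := fun n => (v n).2 with hb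
    have haIcc : ∀ n, a n ∈ Icc (0:ℝ) 1 := fun n => hT (v n) (hvT n)
    have hlr : ∀ n : ℕ, max 0 (a n - 1/(n+1)) < min 1 (a n + 1/(n+1)) := by
      intro n
      have hpos : (0:ℝ) < 1/(n+1) := by positivity
      obtain ⟨h0, h1⟩ := haIcc n
      apply max_lt
      · exact lt_min one_pos (by linarith)
      · exact lt_min (by linarith) (by linarith)
    have hpick : ∀ n : ℕ, ∃ x : ℝ, (∃ q : ℚ, x = q + n * Real.sqrt 2) ∧
        x ∈ Ioo (max 0 (a n - 1/(n+1))) (min 1 (a n + 1/(n+1))) ∧ x ≠ a n :=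
      fun n => dense_coset_pick n (a n) _ _ (hlr n)
    choose X hXq hXI hXa using hpick
    have hXIcc : ∀ n, X n ∈ Icc (0:ℝ) 1 := by
      intro n
      obtain ⟨hl, hr⟩ := hXI n
      constructor
      · exact le_trans (le_max_left 0 _) hl.le
      · exact le_trans hr.le (min_le_left 1 _)
    have hXdist : ∀ n, |X n - a n| < 1/(n+1) := by
      intro n
      obtain ⟨hl, hr⟩ := hXI n
      rw [abs_lt]
      constructor
      · have := lt_of_le_of_lt (le_max_right 0 (a n - 1/(n+1))) hl
        linarith
      · have := lt_of_lt_of_le hr (min_le_right 1 (a n + 1/(n+1)))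
        linarith
    have hXinj : Function.Injective X := by
      intro n m hEq
      by_contra hnm
      obtain ⟨q1, hq1⟩ := hXq n
      obtain ⟨q2, hq2⟩ := hXq m
      rw [hq1, hq2] at hEq
      have hq0 : ((n:ℚ) - (m:ℚ)) ≠ 0 :=
        sub_ne_zero.2 fun hh => hnm (by exact_mod_cast hh)
      have hirr : Irrational (((n - m : ℚ) : ℝ) * Real.sqrt 2) :=
        irrational_sqrt_two.ratCast_mul hq0
      refine hirr.ne_rat (q2 - q1) ?_
      push_cast
      linear_combination hEq
    set f : ℝ → ℝ := fun x => if h : ∃ n, X n = x then b h.choose else gsel T x with hf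
    have hfX : ∀ n, f (X n) = b n := by
      intro n
      have h : ∃ m, X m = X n := ⟨n, rfl⟩
      simp only [hf]
      rw [dif_pos h]
      exact congrArg b (hXinj h.choose_spec)
    have hfg : ∀ x, (¬ ∃ n, X n = x) → f x = gsel T x := by
      intro x h
      simp only [hf]
      rw [dif_neg h]
    refine ⟨f, ?_, ⟨C, ?_⟩, ?_⟩
    · -- Baire2
      have hgB : Baire1 (gsel T) := gsel_baire1 T C hc hbd hfull hne
      set F : ℕ → ℝ → ℝ :=
        fun N x => gsel T x + ∑ n ∈ Finset.range N,
          (if x = X n then b n - gsel T (X n) else 0) with hF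
      have hFb : ∀ N, Baire1 (F N) := by
        intro N
        induction N with
        | zero =>
          have h0 : F 0 = gsel T := by
            funext x
            simp [hF]
          rw [h0]; exact hgB
        | succ N ih =>
          have hs : F (N+1) =
              fun x => F N x + (if x = X N then b N - gsel T (X N) else 0) := by
            funext x
            simp only [hF, Finset.sum_range_succ]
            ring
          rw [hs]
          exact baire1_add ih (baire1_point _ _)
      refine ⟨F, hFb, ?_⟩
      intro x hx
      by_cases h : ∃ n, X n = x
      · obtain ⟨n, rfl⟩ := h
        have hval : ∀ N, n < N → F N (X n) = b n := by
          intro N hN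
          have hsum : ∑ m ∈ Finset.range N,
              (if X n = X m then b m - gsel T (X m) else 0) = b n - gsel T (X n) := by
            rw [Finset.sum_eq_single n]
            · rw [if_pos rfl]
            · intro m hm hmn
              rw [if_neg]
              intro hEq
              exact hmn (hXinj hEq.symm)
            · intro hn
              exact absurd (Finset.mem_range.2 hN) hn
          simp only [hF]
          rw [hsum]
          ring
        rw [hfX n]
        apply tendsto_const_nhds.congr'
        filter_upwards [eventually_gt_atTop n] with N hN
        exact (hval N hN).symm
      · have hFx : ∀ N, F N x = f x := by
          intro N
          rw [hfg x h]
          simp only [hF]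
          rw [Finset.sum_eq_zero, add_zero]
          intro m _
          rw [if_neg]
          intro hEq
          exact h ⟨m, hEq.symm⟩
        exact tendsto_const_nhds.congr fun N => (hFx N).symm
    · -- bound
      intro x hx
      by_cases h : ∃ n, X n = x
      · obtain ⟨n, rfl⟩ := h
        rw [hfX n]
        exact hbd (v n) (hvT n)
      · rw [hfg x h]
        exact hbd _ (hgmem x hx)
    · -- accPts = T
      ext p
      constructor
      · intro hp
        rw [← hc.isClosed.closure_eq, Metric.mem_closure_iff]
        intro ε hε
        obtain ⟨N, hN⟩ := exists_nat_one_div_lt (show (0:ℝ) < ε/2 by linarith)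
        set B : Set (ℝ × ℝ) := (fun n => ((X n : ℝ), b n)) '' (Iic N) with hB
        have hBfin : B.Finite := (Set.finite_Iic N).image _
        have hopen : IsOpen (ball p (ε/2) \ (B \ {p})) :=
          isOpen_ball.sdiff ((hBfin.subset diff_subset).isClosed)
        have hpmem : p ∈ ball p (ε/2) \ (B \ {p}) :=
          ⟨mem_ball_self (by linarith), fun hpB => hpB.2 rfl⟩
        obtain ⟨q, ⟨hqU, hqG⟩, hqne⟩ :=
          accPt_iff_nhds.1 hp _ (hopen.mem_nhds hpmem)
        obtain ⟨hqx, hqy⟩ := hqG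
        have hdistpq : dist p q < ε/2 := by
          rw [dist_comm]
          exact hqU.1
        by_cases h : ∃ n, X n = q.1
        · obtain ⟨n, hn⟩ := h
          have hq2 : q.2 = b n := by
            rw [hqy, ← hn, hfX]
          have hqeq : q = (X n, b n) := Prod.ext hn.symm hq2
          have hnN : ¬ n ≤ N := by
            intro hle
            exact hqU.2 ⟨⟨n, hle, hqeq.symm⟩, hqne⟩
          push_neg at hnN
          have hdq : dist q (v n) < ε/2 := by
            have h1 : dist q (v n) = |X n - a n| := by
              rw [hqeq, Prod.dist_eq]
              show max (dist (X n) (a n)) (dist (b n) (b n)) = _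
              rw [dist_self, Real.dist_eq, max_eq_left (abs_nonneg _)]
            rw [h1]
            calc |X n - a n| < 1/(n+1) := hXdist n
              _ ≤ 1/(N+1) := by
                  apply one_div_le_one_div_of_le (by positivity)
                  have : (N:ℝ) ≤ (n:ℝ) := by exact_mod_cast hnN.le
                  linarith
              _ < ε/2 := hN
          refine ⟨v n, hvT n, ?_⟩
          calc dist p (v n) ≤ dist p q + dist q (v n) := dist_triangle _ _ _
            _ < ε/2 + ε/2 := add_lt_add hdistpq hdq
            _ = ε := by ring
        · have hqT : q ∈ T := by
            have : q = (q.1, f q.1) := Prod.ext rfl hqy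
            rw [this, hfg q.1 h]
            exact hgmem q.1 hqx
          exact ⟨q, hqT, by linarith⟩
      · intro hpT
        show AccPt p (𝓟 (graphOn (Icc 0 1) f))
        rw [accPt_iff_nhds]
        intro U hU
        obtain ⟨ε, hε, hball⟩ := Metric.mem_nhds_iff.1 hU
        obtain ⟨k, hk⟩ := hudense p hpT (ε/2) (by linarith)
        obtain ⟨N, hN⟩ := exists_nat_one_div_lt (show (0:ℝ) < ε/2 by linarith)
        have hcand : ∃ n : ℕ, (N:ℝ) ≤ (n:ℝ) ∧ v n = u k ∧ X n ≠ p.1 := by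
          have hv1 : v (Nat.pair k N) = u k := by
            simp only [hv, Nat.unpair_pair]
          have hv2 : v (Nat.pair k (N+1)) = u k := by
            simp only [hv, Nat.unpair_pair]
          by_cases h1 : X (Nat.pair k N) ≠ p.1
          · exact ⟨Nat.pair k N, by exact_mod_cast Nat.right_le_pair k N, hv1, h1⟩
          · push_neg at h1
            refine ⟨Nat.pair k (N+1),
              by exact_mod_cast le_trans (Nat.le_succ N) (Nat.right_le_pair k (N+1)), hv2, ?_⟩
            intro h2
            have h3 : X (Nat.pair k N) = X (Nat.pair k (N+1)) := by rw [h1, h2]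
            have h4 := hXinj h3
            have h5 := congrArg (fun m => (Nat.unpair m).2) h4
            simp only [Nat.unpair_pair] at h5
            omega
        obtain ⟨n, hnN, hvn, hXp⟩ := hcand
        have hmem : ((X n : ℝ), b n) ∈ graphOn (Icc 0 1) f := ⟨hXIcc n, (hfX n).symm⟩
        have hdq : dist ((X n : ℝ), b n) (v n) < ε/2 := by
          have h1 : dist ((X n : ℝ), b n) (v n) = |X n - a n| := by
            rw [show v n = ((a n : ℝ), b n) from rfl, Prod.dist_eq]
            show max (dist (X n) (a n)) (dist (b n) (b n)) = _
            rw [dist_self, Real.dist_eq, max_eq_left (abs_nonneg _)]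
          rw [h1]
          calc |X n - a n| < 1/(n+1) := hXdist n
            _ ≤ 1/(N+1) := by
                apply one_div_le_one_div_of_le (by positivity)
                linarith
            _ < ε/2 := hN
        refine ⟨((X n : ℝ), b n), ⟨hball ?_, hmem⟩, ?_⟩
        · rw [mem_ball]
          calc dist ((X n : ℝ), b n) p ≤ dist ((X n : ℝ), b n) (v n) + dist (v n) p :=
              dist_triangle _ _ _
            _ < ε/2 + ε/2 := by
                apply add_lt_add hdq
                rw [hvn, dist_comm]
                exact hk
            _ = ε := by ring
        · intro hEq
          apply hXp
          rw [← hEq]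
end
end

section
/- Let f : [0,1] → ℝ be a Baire class 1 function. Then its graph G is the intersection of a countable sequence of open strips, i.e., there exist open sets Sₙ ⊆ ℝ² with every vertical section Sₙ(x) an open interval, such that ⋂ₙ Sₙ = G. -/
open Set Filter Topology Metric

noncomputable section

theorem stmt17 (f : ℝ → ℝ) (hf : Baire1 f) :
    ∃ S : ℕ → Set (ℝ × ℝ), (∀ n, IsOpen (S n)) ∧
      (∀ n, ∀ x : ℝ, ({y : ℝ | (x, y) ∈ S n}).OrdConnected) ∧
      (⋂ n, S n) = graphOn (Icc 0 1) f := by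
  obtain ⟨g, hgc, hgt⟩ := hf
  set G : ℕ → ℝ → ℝ := fun m x => g m (projIcc (0:ℝ) 1 zero_le_one x) with hGdef
  have hGc : ∀ m, Continuous (G m) := fun m =>
    (hgc m).comp_continuous (continuous_subtype_val.comp continuous_projIcc)
      (fun x => (projIcc (0:ℝ) 1 zero_le_one x).2)
  have hGt : ∀ x ∈ Icc (0:ℝ) 1, Tendsto (fun m => G m x) atTop (𝓝 (f x)) := by
    intro x hx
    have h : ∀ m, G m x = g m x := by
      intro m; simp [hGdef, projIcc_of_mem zero_le_one hx]
    simpa [h] using hgt x hx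
  set ε : ℕ → ℝ := fun n => 1 / (n + 1) with hεdef
  have hεpos : ∀ n, 0 < ε n := fun n => by positivity
  set A : ℕ → ℝ → EReal := fun n x => ⨅ m, ((G (m + n) x : ℝ) : EReal) with hAdef
  set B : ℕ → ℝ → EReal := fun n x => ⨆ m, ((G (m + n) x : ℝ) : EReal) with hBdef
  refine ⟨fun n => {p : ℝ × ℝ | p.1 ∈ Ioo (-(ε n)) (1 + ε n) ∧
      A n p.1 < ((p.2 + ε n : ℝ) : EReal) ∧ ((p.2 - ε n : ℝ) : EReal) < B n p.1}, ?_, ?_, ?_⟩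
  · intro n
    have h1 : IsOpen {p : ℝ × ℝ | p.1 ∈ Ioo (-(ε n)) (1 + ε n)} :=
      isOpen_Ioo.preimage continuous_fst
    have h2 : IsOpen {p : ℝ × ℝ | A n p.1 < ((p.2 + ε n : ℝ) : EReal)} := by
      have heq : {p : ℝ × ℝ | A n p.1 < ((p.2 + ε n : ℝ) : EReal)} =
          ⋃ r : ℝ, ⋃ m : ℕ, (G (m + n) ⁻¹' Iio r) ×ˢ Ioi (r - ε n) := by
        ext p
        simp only [mem_setOf_eq, mem_iUnion, mem_prod, mem_preimage, mem_Iio, mem_Ioi]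
        constructor
        · intro h
          obtain ⟨r, hr1, hr2⟩ := EReal.exists_between_coe_real h
          obtain ⟨m, hm⟩ := iInf_lt_iff.mp hr1
          exact ⟨r, m, EReal.coe_lt_coe_iff.mp hm, by
            have := EReal.coe_lt_coe_iff.mp hr2; linarith⟩
        · rintro ⟨r, m, hm, hr⟩
          calc A n p.1 ≤ ((G (m + n) p.1 : ℝ) : EReal) := iInf_le _ m
            _ < ((p.2 + ε n : ℝ) : EReal) := EReal.coe_lt_coe_iff.mpr (by linarith)
      rw [heq]
      exact isOpen_iUnion fun r => isOpen_iUnion fun m =>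
        ((isOpen_Iio.preimage (hGc (m + n))).prod isOpen_Ioi)
    have h3 : IsOpen {p : ℝ × ℝ | ((p.2 - ε n : ℝ) : EReal) < B n p.1} := by
      have heq : {p : ℝ × ℝ | ((p.2 - ε n : ℝ) : EReal) < B n p.1} =
          ⋃ r : ℝ, ⋃ m : ℕ, (G (m + n) ⁻¹' Ioi r) ×ˢ Iio (r + ε n) := by
        ext p
        simp only [mem_setOf_eq, mem_iUnion, mem_prod, mem_preimage, mem_Ioi, mem_Iio]
        constructor
        · intro h
          obtain ⟨r, hr1, hr2⟩ := EReal.exists_between_coe_real h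
          obtain ⟨m, hm⟩ := lt_iSup_iff.mp hr2
          exact ⟨r, m, EReal.coe_lt_coe_iff.mp hm, by
            have := EReal.coe_lt_coe_iff.mp hr1; linarith⟩
        · rintro ⟨r, m, hm, hr⟩
          calc ((p.2 - ε n : ℝ) : EReal) < ((G (m + n) p.1 : ℝ) : EReal) :=
                EReal.coe_lt_coe_iff.mpr (by linarith)
            _ ≤ B n p.1 := le_iSup (fun m => ((G (m + n) p.1 : ℝ) : EReal)) m
      rw [heq]
      exact isOpen_iUnion fun r => isOpen_iUnion fun m =>
        ((isOpen_Ioi.preimage (hGc (m + n))).prod isOpen_Iio)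
    exact (h1.inter (h2.inter h3))
  · intro n x
    constructor
    intro y1 h1 y2 h2 y hy
    refine ⟨h1.1, ?_, ?_⟩
    · exact lt_of_lt_of_le h1.2.1 (EReal.coe_le_coe_iff.mpr (by linarith [hy.1]))
    · exact lt_of_le_of_lt (EReal.coe_le_coe_iff.mpr (by linarith [hy.2])) h2.2.2
  · ext p
    simp only [mem_iInter, _root_.graphOn, mem_setOf_eq]
    constructor
    · intro hp
      have hx0 : 0 ≤ p.1 := by
        by_contra h
        push_neg at h
        obtain ⟨n, hn⟩ := exists_nat_one_div_lt (show (0:ℝ) < -p.1 by linarith)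
        have := (hp n).1.1
        simp only [hεdef] at this
        linarith
      have hx1 : p.1 ≤ 1 := by
        by_contra h
        push_neg at h
        obtain ⟨n, hn⟩ := exists_nat_one_div_lt (show (0:ℝ) < p.1 - 1 by linarith)
        have := (hp n).1.2
        simp only [hεdef] at this
        linarith
      have hx : p.1 ∈ Icc (0:ℝ) 1 := ⟨hx0, hx1⟩
      have htd := hGt p.1 hx
      have key : ∀ δ : ℝ, 0 < δ → p.2 - δ ≤ f p.1 ∧ f p.1 - δ ≤ p.2 := by
        intro δ hδ
        have hev1 : ∀ᶠ k in atTop, G k p.1 < f p.1 + δ / 2 :=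
          htd.eventually_lt_const (by linarith)
        have hev2 : ∀ᶠ k in atTop, f p.1 - δ / 2 < G k p.1 :=
          htd.eventually_const_lt (by linarith)
        obtain ⟨N, hN⟩ := eventually_atTop.mp (hev1.and hev2)
        obtain ⟨n0, hn0⟩ := exists_nat_one_div_lt (show (0:ℝ) < δ / 2 by linarith)
        set n := max n0 N with hn
        have hεn : ε n < δ / 2 := by
          have h1 : (n0 : ℝ) + 1 ≤ (n : ℝ) + 1 := by
            have : n0 ≤ n := le_max_left _ _
            exact_mod_cast Nat.succ_le_succ this
          have h2 : ε n ≤ 1 / ((n0 : ℝ) + 1) := by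
            simp only [hεdef]
            exact one_div_le_one_div_of_le (by positivity) h1
          linarith
        have hNle : ∀ m : ℕ, N ≤ m + n := fun m =>
          le_trans (le_max_right n0 N) (Nat.le_add_left n m)
        have hBle : B n p.1 ≤ ((f p.1 + δ / 2 : ℝ) : EReal) :=
          iSup_le fun m => EReal.coe_le_coe_iff.mpr (hN (m + n) (hNle m)).1.le
        have hAle : ((f p.1 - δ / 2 : ℝ) : EReal) ≤ A n p.1 :=
          le_iInf fun m => EReal.coe_le_coe_iff.mpr (hN (m + n) (hNle m)).2.le
        have c1 : p.2 - ε n < f p.1 + δ / 2 :=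
          EReal.coe_lt_coe_iff.mp (lt_of_lt_of_le (hp n).2.2 hBle)
        have c2 : f p.1 - δ / 2 < p.2 + ε n :=
          EReal.coe_lt_coe_iff.mp (lt_of_le_of_lt hAle (hp n).2.1)
        constructor <;> linarith
      have hle : p.2 ≤ f p.1 := by
        refine le_of_forall_sub_le fun δ hδ => (key δ hδ).1
      have hge : f p.1 ≤ p.2 := by
        refine le_of_forall_sub_le fun δ hδ => (key δ hδ).2
      exact ⟨hx, le_antisymm hle hge⟩
    · rintro ⟨hx, hy⟩ n
      have htd : Tendsto (fun m => ((G (m + n) p.1 : ℝ) : EReal)) atTop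
          (𝓝 ((f p.1 : ℝ) : EReal)) :=
        (EReal.tendsto_coe.mpr ((hGt p.1 hx).comp (tendsto_add_atTop_nat n)))
      refine ⟨⟨by have := hεpos n; have := hx.1; linarith,
        by have := hεpos n; have := hx.2; linarith⟩, ?_, ?_⟩
      · have h1 : A n p.1 ≤ ((f p.1 : ℝ) : EReal) :=
          ge_of_tendsto' htd fun m => iInf_le _ m
        exact lt_of_le_of_lt h1 (EReal.coe_lt_coe_iff.mpr (by rw [hy]; linarith [hεpos n]))
      · have h1 : ((f p.1 : ℝ) : EReal) ≤ B n p.1 :=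
          le_of_tendsto' htd fun m => le_iSup (fun m => ((G (m + n) p.1 : ℝ) : EReal)) m
        exact lt_of_lt_of_le (EReal.coe_lt_coe_iff.mpr (by rw [hy]; linarith [hεpos n])) h1
end
end

section
/- Let f : [0,1] → ℝ be a function whose graph G is the intersection of a countable sequence of open strips (open sets in ℝ² with every vertical section an open interval). Then f is of Baire class 1. -/
open Set Filter Topology Metric

noncomputable section

theorem stmt18 (f : ℝ → ℝ) (S : ℕ → Set (ℝ × ℝ)) (hopen : ∀ n, IsOpen (S n))
    (hstrip : ∀ n, ∀ x : ℝ, ({y : ℝ | (x, y) ∈ S n}).OrdConnected)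
    (hinter : (⋂ n, S n) = graphOn (Icc 0 1) f) :
    Baire1 f := by
  classical
  have hmemS : ∀ x ∈ Icc (0:ℝ) 1, ∀ k, (x, f x) ∈ S k := by
    intro x hx k
    have h : (x, f x) ∈ ⋂ n, S n := by rw [hinter]; exact ⟨hx, rfl⟩
    exact mem_iInter.1 h k
  -- selection for each n
  have hsel : ∀ n : ℕ, ∃ g : C(Icc (0:ℝ) 1, ℝ),
      ∀ x : Icc (0:ℝ) 1, ∀ k ≤ n, ((x : ℝ), g x) ∈ S k := by
    intro n
    have := exists_continuous_forall_mem_convex_of_local_const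
      (t := fun x : Icc (0:ℝ) 1 => {y : ℝ | ∀ k ≤ n, ((x : ℝ), y) ∈ S k}) ?_ ?_
    · obtain ⟨g, hg⟩ := this
      exact ⟨g, fun x => hg x⟩
    · intro x
      have hoc : ({y : ℝ | ∀ k ≤ n, ((x : ℝ), y) ∈ S k}).OrdConnected := by
        constructor
        intro a ha b hb z hz k hk
        exact (hstrip k x).out (ha k hk) (hb k hk) hz
      exact hoc.convex
    · intro x
      refine ⟨f x, ?_⟩
      have hW : IsOpen (⋂ k ∈ Finset.range (n+1), S k) :=
        isOpen_biInter_finset fun k _ => hopen k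
      have hcont : Continuous fun y : Icc (0:ℝ) 1 => ((y : ℝ), f (x : ℝ)) :=
        (continuous_subtype_val).prodMk continuous_const
      have hx0 : (fun y : Icc (0:ℝ) 1 => ((y : ℝ), f (x : ℝ))) ⁻¹'
          (⋂ k ∈ Finset.range (n+1), S k) ∈ 𝓝 x := by
        refine (hW.preimage hcont).mem_nhds ?_
        simp only [mem_preimage, mem_iInter]
        intro k _
        exact hmemS x x.2 k
      filter_upwards [hx0] with y hy k hk
      simp only [mem_preimage, mem_iInter] at hy
      exact hy k (Finset.mem_range.2 (Nat.lt_succ_of_le hk))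
  choose g hg using hsel
  refine ⟨fun n x => if h : x ∈ Icc (0:ℝ) 1 then g n ⟨x, h⟩ else 0, ?_, ?_⟩
  · intro n
    rw [continuousOn_iff_continuous_restrict]
    have : (Icc (0:ℝ) 1).restrict
        (fun x => if h : x ∈ Icc (0:ℝ) 1 then g n ⟨x, h⟩ else 0) = g n := by
      funext x
      show (if h : (x:ℝ) ∈ Icc (0:ℝ) 1 then g n ⟨x, h⟩ else 0) = g n x
      rw [dif_pos x.2]
    refine (congrArg Continuous this).mpr ?_
    exact (g n).continuous
  · intro x hx
    rw [Metric.tendsto_atTop]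
    intro ε hε
    have hup : ∃ N, (x, f x + ε) ∉ S N := by
      by_contra h
      push_neg at h
      have : (x, f x + ε) ∈ ⋂ n, S n := mem_iInter.2 h
      rw [hinter] at this
      have h2 : f x + ε = f x := this.2
      linarith
    have hdn : ∃ N, (x, f x - ε) ∉ S N := by
      by_contra h
      push_neg at h
      have : (x, f x - ε) ∈ ⋂ n, S n := mem_iInter.2 h
      rw [hinter] at this
      have h2 : f x - ε = f x := this.2
      linarith
    obtain ⟨N₁, hN₁⟩ := hup
    obtain ⟨N₂, hN₂⟩ := hdn
    refine ⟨max N₁ N₂, fun n hn => ?_⟩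
    have hgx : ∀ k ≤ n, (x, g n ⟨x, hx⟩) ∈ S k := fun k hk => hg n ⟨x, hx⟩ k hk
    simp only [dif_pos hx]
    rw [Real.dist_eq, abs_lt]
    constructor
    · by_contra h
      push_neg at h
      have h1 : g n ⟨x, hx⟩ ≤ f x - ε := by linarith
      have hm : (x, f x - ε) ∈ S N₂ := by
        have := (hstrip N₂ x).out (hgx N₂ (le_trans (le_max_right N₁ N₂) hn))
          (hmemS x hx N₂) (⟨h1, by linarith⟩ : f x - ε ∈ Icc (g n ⟨x, hx⟩) (f x))
        exact this
      exact hN₂ hm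
    · by_contra h
      push_neg at h
      have h1 : f x + ε ≤ g n ⟨x, hx⟩ := by linarith
      have hm : (x, f x + ε) ∈ S N₁ := by
        have := (hstrip N₁ x).out (hmemS x hx N₁)
          (hgx N₁ (le_trans (le_max_left N₁ N₂) hn))
          (⟨by linarith, h1⟩ : f x + ε ∈ Icc (f x) (g n ⟨x, hx⟩))
        exact this
      exact hN₁ hm
end
end
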